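/- If d ≥ 2 is a prime power (d = p^n for a prime p and n ≥ 1), then there exists a complete set of d+1 pairwise mutually unbiased orthonormal bases of ℂ^d. -/

import Mathlib

open scoped ComplexInnerProductSpace
open scoped Matrix
open Finset

set_option linter.unusedSectionVars false
set_option maxHeartbeats 1000000

noncomputable section

namespace MUB

open Module.End in
/-- A commuting family of symmetric operators on a finite-dimensional complex inner product
space admits an orthonormal basis of joint eigenvectors. -/
lemma exists_joint_eigenbasis {E : Type} [NormedAddCommGroup E] [InnerProductSpace ℂ E]
    [FiniteDimensional ℂ E] {ι : Type} (T : ι → Module.End ℂ E)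
    (hT : ∀ i, (T i).IsSymmetric) (hC : ∀ i j, Commute (T i) (T j)) {d : ℕ}
    (hd : Module.finrank ℂ E = d) :
    ∃ (e : OrthonormalBasis (Fin d) ℂ E) (χ : Fin d → ι → ℂ),
      ∀ m i, T i (e m) = χ m i • e m := by
  classical
  have hOrth := LinearMap.IsSymmetric.orthogonalFamily_iInf_eigenspaces hT
  have hsup := LinearMap.IsSymmetric.iSup_iInf_eq_top_of_commute hT
    (fun i j _ => hC i j)
  set V : (ι → ℂ) → Submodule ℂ E := fun χ => ⨅ j, eigenspace (T j) (χ j) with hVdef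
  letI : Fintype {χ // V χ ≠ ⊥} := hOrth.independent.fintypeNeBotOfFiniteDimensional
  have hOrth' : OrthogonalFamily ℂ (fun s : {χ // V χ ≠ ⊥} => V s.1)
      (fun s => (V s.1).subtypeₗᵢ) := hOrth.comp Subtype.val_injective
  have hsup' : ⨆ s : {χ // V χ ≠ ⊥}, V s.1 = ⊤ := by
    rw [← top_le_iff, ← hsup]
    refine iSup_le fun χ => ?_
    by_cases h : V χ = ⊥
    · rw [h]; exact bot_le
    · exact le_iSup (fun s : {χ // V χ ≠ ⊥} => V s.1) ⟨χ, h⟩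
  have hInt : DirectSum.IsInternal (fun s : {χ // V χ ≠ ⊥} => V s.1) := by
    rw [hOrth'.isInternal_iff, hsup', Submodule.top_orthogonal_eq_bot]
  refine ⟨hInt.subordinateOrthonormalBasis hd hOrth',
    fun m i => (hInt.subordinateOrthonormalBasisIndex hd m hOrth').1 i, fun m i => ?_⟩
  have hmem := hInt.subordinateOrthonormalBasis_subordinate hd m hOrth'
  exact Module.End.mem_eigenspace_iff.mp ((Submodule.mem_iInf _).mp hmem i)


variable {F : Type} [Field F] [Fintype F] [DecidableEq F]

/-- The Weyl–Heisenberg operator attached to `(a,b) ∈ F²` and an additive character `ψ`. -/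
def weyl (ψ : AddChar F ℂ) (a b : F) :
    EuclideanSpace ℂ F →ₗ[ℂ] EuclideanSpace ℂ F where
  toFun f := WithLp.toLp 2 (fun x => ψ (b * x) * f (x + a))
  map_add' f g := by ext x; simp [mul_add]
  map_smul' c f := by ext x; simp [Pi.smul_apply, smul_eq_mul]; ring

variable (ψ : AddChar F ℂ)

lemma weyl_apply (a b : F) (f : EuclideanSpace ℂ F) (x : F) :
    weyl ψ a b f x = ψ (b * x) * f (x + a) := rfl

lemma weyl_zero_zero : weyl ψ 0 0 = LinearMap.id := by
  ext f x
  rw [LinearMap.id_apply, weyl_apply]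
  simp only [zero_mul, AddChar.map_zero_eq_one, one_mul]
  exact congrArg f (add_zero x)

lemma smul_weyl_apply (c : ℂ) (a b : F) (f : EuclideanSpace ℂ F) (x : F) :
    (c • weyl ψ a b) f x = c * (ψ (b * x) * f (x + a)) := rfl

lemma weyl_comp (a b c e : F) :
    (weyl ψ a b) ∘ₗ (weyl ψ c e) = ψ (e * a) • weyl ψ (a + c) (b + e) := by
  ext f x
  rw [LinearMap.comp_apply, weyl_apply, weyl_apply, smul_weyl_apply]
  rw [show x + a + c = x + (a + c) by ring, show e * (x + a) = e * x + e * a by ring,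
    show (b + e) * x = b * x + e * x by ring, AddChar.map_add_eq_mul, AddChar.map_add_eq_mul]
  ring

lemma conj_mul_self_of_norm_one {z : ℂ} (hz : ‖z‖ = 1) : (starRingEnd ℂ) z * z = 1 := by
  rw [mul_comm, Complex.mul_conj, Complex.normSq_eq_norm_sq, hz]
  norm_num

lemma psi_ne_zero (hnorm : ∀ x, ‖ψ x‖ = 1) (x : F) : ψ x ≠ 0 := by
  intro h
  have := hnorm x
  rw [h] at this
  simp at this

lemma conj_psi (hnorm : ∀ x, ‖ψ x‖ = 1) (x : F) : (starRingEnd ℂ) (ψ x) = ψ (-x) := by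
  have h1 : ψ x * ψ (-x) = 1 := by
    rw [← AddChar.map_add_eq_mul, add_neg_cancel, AddChar.map_zero_eq_one]
  have h2 : ψ x * (starRingEnd ℂ) (ψ x) = 1 := by
    rw [mul_comm]; exact conj_mul_self_of_norm_one (hnorm x)
  exact mul_left_cancel₀ (psi_ne_zero ψ hnorm x) (h2.trans h1.symm)

lemma sum_psi_eq_zero (hdeg : ∀ c : F, c ≠ 0 → ∃ x, ψ (c * x) ≠ 1) {c : F} (hc : c ≠ 0) :
    ∑ x : F, ψ (c * x) = 0 := by
  obtain ⟨x₀, hx₀⟩ := hdeg c hc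
  have key : ψ (c * x₀) * ∑ x : F, ψ (c * x) = ∑ x : F, ψ (c * x) := by
    rw [Finset.mul_sum]
    refine Fintype.sum_equiv (Equiv.addLeft x₀) _ _ fun x => ?_
    rw [← AddChar.map_add_eq_mul]
    exact congrArg ψ (by simp [Equiv.coe_addLeft]; ring)
  have h0 : (ψ (c * x₀) - 1) * ∑ x : F, ψ (c * x) = 0 := by
    rw [sub_mul, one_mul, key, sub_self]
  rcases mul_eq_zero.mp h0 with h | h
  · exact absurd (sub_eq_zero.mp h) hx₀
  · exact h

/-- Sum of diagonal inner products w.r.t. an orthonormal basis is the trace. -/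
lemma sum_inner_eq_trace {ι : Type*} [Fintype ι] [DecidableEq ι]
    (v : OrthonormalBasis ι ℂ (EuclideanSpace ℂ F))
    (A : EuclideanSpace ℂ F →ₗ[ℂ] EuclideanSpace ℂ F) :
    ∑ i, ⟪v i, A (v i)⟫ = LinearMap.trace ℂ (EuclideanSpace ℂ F) A := by
  rw [LinearMap.trace_eq_matrix_trace ℂ v.toBasis, Matrix.trace]
  refine Finset.sum_congr rfl fun i _ => ?_
  rw [Matrix.diag_apply, LinearMap.toMatrix_apply, OrthonormalBasis.coe_toBasis,
    OrthonormalBasis.coe_toBasis_repr_apply, OrthonormalBasis.repr_apply_apply]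

/-- Weyl operators preserve the inner product. -/
lemma weyl_inner_weyl (hnorm : ∀ x, ‖ψ x‖ = 1) (a b : F) (f g : EuclideanSpace ℂ F) :
    ⟪weyl ψ a b f, weyl ψ a b g⟫ = ⟪f, g⟫ := by
  simp only [PiLp.inner_apply, RCLike.inner_apply, weyl_apply]
  refine Fintype.sum_equiv (Equiv.addRight a) _ _ fun x => ?_
  simp only [Equiv.coe_addRight, map_mul]
  rw [mul_comm, mul_comm (g.ofLp (x + a))]
  calc ((starRingEnd ℂ) (ψ (b * x)) * (starRingEnd ℂ) (f (x + a))) * (ψ (b * x) * g (x + a))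
      = ((starRingEnd ℂ) (ψ (b * x)) * ψ (b * x)) * ((starRingEnd ℂ) (f (x + a)) * g (x + a)) := by
        ring
    _ = (starRingEnd ℂ) (f (x + a)) * g (x + a) := by
        rw [conj_mul_self_of_norm_one (hnorm _), one_mul]

/-- The adjoint relation for Weyl operators. -/
lemma inner_weyl_left (hnorm : ∀ x, ‖ψ x‖ = 1) (a b : F) (f g : EuclideanSpace ℂ F) :
    ⟪weyl ψ a b f, g⟫ = ⟪f, (ψ (a * b) • weyl ψ (-a) (-b)) g⟫ := by
  simp only [PiLp.inner_apply, RCLike.inner_apply, weyl_apply, LinearMap.smul_apply]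
  refine Fintype.sum_equiv (Equiv.addRight a) _ _ fun x => ?_
  simp only [Equiv.coe_addRight, map_mul]
  have hsm : (ψ (a * b) • ((weyl ψ (-a) (-b)) g)) (x + a)
      = ψ (a * b) * (ψ (-b * (x + a)) * g (x + a + -a)) := rfl
  rw [hsm, conj_psi ψ hnorm,
    show (-(b * x)) = a * b + -b * (x + a) by ring, AddChar.map_add_eq_mul,
    show x + a + -a = x by ring]
  ring

/-- The trace of a nontrivial Weyl operator vanishes. -/
lemma trace_weyl_eq_zero (hdeg : ∀ c : F, c ≠ 0 → ∃ x, ψ (c * x) ≠ 1)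
    {a b : F} (hab : ¬(a = 0 ∧ b = 0)) :
    LinearMap.trace ℂ (EuclideanSpace ℂ F) (weyl ψ a b) = 0 := by
  rw [← sum_inner_eq_trace (EuclideanSpace.basisFun F ℂ) (weyl ψ a b)]
  have hterm : ∀ x : F, ⟪(EuclideanSpace.basisFun F ℂ) x, weyl ψ a b ((EuclideanSpace.basisFun F ℂ) x)⟫
      = ψ (b * x) * (if x + a = x then (1:ℂ) else 0) := by
    intro x
    rw [EuclideanSpace.basisFun_apply, EuclideanSpace.inner_single_left]
    simp only [map_one, one_mul, weyl_apply, EuclideanSpace.basisFun_apply,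
      EuclideanSpace.single_apply]
  rw [Finset.sum_congr rfl fun x _ => hterm x]
  by_cases ha : a = 0
  · subst ha
    have hb : b ≠ 0 := fun hb => hab ⟨rfl, hb⟩
    simp only [add_zero, eq_self_iff_true, if_true, mul_one]
    exact sum_psi_eq_zero ψ hdeg hb
  · have : ∀ x : F, (if x + a = x then (1:ℂ) else 0) = 0 := by
      intro x
      have hne : x + a ≠ x := fun h => ha (by simpa using congrArg (fun y => y - x) h)
      rw [if_neg hne]
    simp only [this, mul_zero, Finset.sum_const_zero]

/-! ### Lines in `F²` and the associated commuting classes of Weyl operators -/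

/-- The `q+1` lines through the origin in `F²`, parametrised by slope. -/
def lineVec : Option F → F → F × F
  | none, t => (0, t)
  | some m, t => (t, m * t)

lemma lineVec_ne_zero (ℓ : Option F) {t : F} (ht : t ≠ 0) :
    ¬((lineVec ℓ t).1 = 0 ∧ (lineVec ℓ t).2 = 0) := by
  cases ℓ <;> simp [lineVec, ht]

lemma lineVec_neg (ℓ : Option F) (t : F) :
    lineVec ℓ (-t) = (-(lineVec ℓ t).1, -(lineVec ℓ t).2) := by
  cases ℓ <;> simp [lineVec]

lemma lineVec_sym (ℓ : Option F) (t s : F) :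
    (lineVec ℓ s).2 * (lineVec ℓ t).1 = (lineVec ℓ t).2 * (lineVec ℓ s).1 := by
  cases ℓ <;> simp [lineVec] <;> ring

/-- The Weyl operator attached to the `t`-th point of the line `ℓ`. -/
def Wline (ℓ : Option F) (t : F) : EuclideanSpace ℂ F →ₗ[ℂ] EuclideanSpace ℂ F :=
  weyl ψ (lineVec ℓ t).1 (lineVec ℓ t).2

lemma Wline_zero (ℓ : Option F) : Wline ψ ℓ 0 = LinearMap.id := by
  cases ℓ <;> simp [Wline, lineVec, weyl_zero_zero]

lemma Wline_commute (ℓ : Option F) (t s : F) : Commute (Wline ψ ℓ t) (Wline ψ ℓ s) := by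
  show _ * _ = _ * _
  rw [Module.End.mul_eq_comp, Module.End.mul_eq_comp, Wline, Wline, weyl_comp, weyl_comp,
    lineVec_sym, add_comm (lineVec ℓ s).1, add_comm (lineVec ℓ s).2]

/-- The (scaled) adjoint of `Wline ψ ℓ t`. -/
def Wadj (ℓ : Option F) (t : F) : EuclideanSpace ℂ F →ₗ[ℂ] EuclideanSpace ℂ F :=
  ψ ((lineVec ℓ t).1 * (lineVec ℓ t).2) • Wline ψ ℓ (-t)

lemma Wadj_eq (ℓ : Option F) (t : F) :
    Wadj ψ ℓ t = ψ ((lineVec ℓ t).1 * (lineVec ℓ t).2) •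
      weyl ψ (-(lineVec ℓ t).1) (-(lineVec ℓ t).2) := by
  rw [Wadj, Wline, lineVec_neg]

lemma inner_Wline_left (hnorm : ∀ x, ‖ψ x‖ = 1) (ℓ : Option F) (t : F)
    (f g : EuclideanSpace ℂ F) :
    ⟪Wline ψ ℓ t f, g⟫ = ⟪f, Wadj ψ ℓ t g⟫ := by
  rw [Wadj_eq, Wline]
  exact inner_weyl_left ψ hnorm _ _ f g

lemma inner_Wadj_left (hnorm : ∀ x, ‖ψ x‖ = 1) (ℓ : Option F) (t : F)
    (f g : EuclideanSpace ℂ F) :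
    ⟪Wadj ψ ℓ t f, g⟫ = ⟪f, Wline ψ ℓ t g⟫ := by
  have h1 : ⟪Wline ψ ℓ (-t) f, g⟫ = ⟪f, Wadj ψ ℓ (-t) g⟫ := inner_Wline_left ψ hnorm ℓ (-t) f g
  have h2 : Wadj ψ ℓ (-t) = ψ ((lineVec ℓ t).1 * (lineVec ℓ t).2) • Wline ψ ℓ t := by
    rw [Wadj, lineVec_neg, neg_neg]
    simp only [neg_mul_neg]
  rw [Wadj, LinearMap.smul_apply, inner_smul_left, h1, h2, LinearMap.smul_apply,
    inner_smul_right, ← mul_assoc, conj_mul_self_of_norm_one (hnorm _), one_mul]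

/-- The symmetric ("real") part of `Wline`. -/
def symA (ℓ : Option F) (t : F) : EuclideanSpace ℂ F →ₗ[ℂ] EuclideanSpace ℂ F :=
  Wline ψ ℓ t + Wadj ψ ℓ t

/-- The symmetric ("imaginary") part of `Wline`. -/
def symB (ℓ : Option F) (t : F) : EuclideanSpace ℂ F →ₗ[ℂ] EuclideanSpace ℂ F :=
  Complex.I • (Wline ψ ℓ t - Wadj ψ ℓ t)

lemma symA_isSymmetric (hnorm : ∀ x, ‖ψ x‖ = 1) (ℓ : Option F) (t : F) :
    (symA ψ ℓ t).IsSymmetric := by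
  intro f g
  simp only [symA, LinearMap.add_apply, inner_add_left, inner_add_right]
  rw [inner_Wline_left ψ hnorm, inner_Wadj_left ψ hnorm, add_comm]

lemma symB_isSymmetric (hnorm : ∀ x, ‖ψ x‖ = 1) (ℓ : Option F) (t : F) :
    (symB ψ ℓ t).IsSymmetric := by
  intro f g
  simp only [symB, LinearMap.smul_apply, LinearMap.sub_apply, inner_smul_left,
    inner_smul_right, inner_sub_left, inner_sub_right, Complex.conj_I]
  rw [inner_Wline_left ψ hnorm, inner_Wadj_left ψ hnorm]
  ring

lemma commute_smul_left' {R : Type*} [CommRing R] {M : Type*} [AddCommGroup M] [Module R M]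
    {a b : Module.End R M} (h : Commute a b) (c : R) : Commute (c • a) b := by
  unfold Commute SemiconjBy at h ⊢
  rw [smul_mul_assoc, mul_smul_comm, h]

lemma commute_smul_right' {R : Type*} [CommRing R] {M : Type*} [AddCommGroup M] [Module R M]
    {a b : Module.End R M} (h : Commute a b) (c : R) : Commute a (c • b) :=
  ((commute_smul_left' h.symm c)).symm

lemma sym_commute (ℓ : Option F) (t s : F) (x y : Bool) :
    Commute (if x then symB ψ ℓ t else symA ψ ℓ t) (if y then symB ψ ℓ s else symA ψ ℓ s) := by
  have base : ∀ u v : F, Commute (Wline ψ ℓ u) (Wline ψ ℓ v) := Wline_commute ψ ℓ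
  have hWA : ∀ u v : F, Commute (Wline ψ ℓ u) (Wadj ψ ℓ v) := fun u v =>
    commute_smul_right' (base u (-v)) _
  have hAW : ∀ u v : F, Commute (Wadj ψ ℓ u) (Wline ψ ℓ v) := fun u v => (hWA v u).symm
  have hAA : ∀ u v : F, Commute (Wadj ψ ℓ u) (Wadj ψ ℓ v) := fun u v =>
    commute_smul_left' (commute_smul_right' (base (-u) (-v)) _) _
  have hA : ∀ u v : F, Commute (symA ψ ℓ u) (symA ψ ℓ v) := fun u v =>
    (((base u v).add_right (hWA u v)).add_left (((hAW u v).add_right (hAA u v))))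
  have hsAB : ∀ u v : F, Commute (symA ψ ℓ u) (symB ψ ℓ v) := fun u v =>
    commute_smul_right' ((((base u v).sub_right (hWA u v)).add_left
      (((hAW u v).sub_right (hAA u v))))) _
  have hB : ∀ u v : F, Commute (symB ψ ℓ u) (symB ψ ℓ v) := fun u v =>
    commute_smul_left' (commute_smul_right' ((((base u v).sub_right (hWA u v)).sub_left
      (((hAW u v).sub_right (hAA u v))))) _) _
  cases x <;> cases y <;> simp only [if_true, if_false, Bool.false_eq_true]
  · exact hA t s
  · exact hsAB t s
  · exact (hsAB s t).symm
  · exact hB t s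

/-- Decomposition of `Wline` in terms of its symmetric parts. -/
lemma Wline_eq_sym (ℓ : Option F) (t : F) :
    Wline ψ ℓ t = (2⁻¹ : ℂ) • (symA ψ ℓ t - Complex.I • symB ψ ℓ t) := by
  rw [symA, symB, smul_smul, Complex.I_mul_I, neg_one_smul]
  module

/-- Each commuting class of Weyl operators admits an orthonormal basis of joint
eigenvectors. -/
lemma exists_eigenbasis (hnorm : ∀ x, ‖ψ x‖ = 1) {d : ℕ} (hd : Fintype.card F = d)
    (ℓ : Option F) :
    ∃ (e : OrthonormalBasis (Fin d) ℂ (EuclideanSpace ℂ F)) (lam : Fin d → F → ℂ),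
      ∀ m t, Wline ψ ℓ t (e m) = lam m t • e m := by
  classical
  have hT : ∀ i : F × Bool, ((fun i : F × Bool =>
      cond i.2 (symB ψ ℓ i.1) (symA ψ ℓ i.1)) i).IsSymmetric := by
    rintro ⟨t, b⟩
    cases b
    · exact symA_isSymmetric ψ hnorm ℓ t
    · exact symB_isSymmetric ψ hnorm ℓ t
  have hC : ∀ i j : F × Bool, Commute
      ((fun i : F × Bool => cond i.2 (symB ψ ℓ i.1) (symA ψ ℓ i.1)) i)
      ((fun i : F × Bool => cond i.2 (symB ψ ℓ i.1) (symA ψ ℓ i.1)) j) := by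
    rintro ⟨t, x⟩ ⟨s, y⟩
    have := sym_commute ψ ℓ t s x y
    cases x <;> cases y <;> simpa using this
  have hn : Module.finrank ℂ (EuclideanSpace ℂ F) = d := by
    simp [finrank_euclideanSpace, hd]
  obtain ⟨e, χ, hχ⟩ := exists_joint_eigenbasis _ hT hC hn
  refine ⟨e, fun m t => (2⁻¹ : ℂ) * (χ m (t, false) - Complex.I * χ m (t, true)),
    fun m t => ?_⟩
  have heA : symA ψ ℓ t (e m) = χ m (t, false) • e m := hχ m (t, false)
  have heB : symB ψ ℓ t (e m) = χ m (t, true) • e m := hχ m (t, true)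
  rw [Wline_eq_sym ψ ℓ t]
  simp only [LinearMap.smul_apply, LinearMap.sub_apply]
  rw [heA, heB]
  module

/-! ### Orthogonality relations for the eigenvalue system -/

lemma lineVec_add_fst (ℓ : Option F) (t s : F) :
    (lineVec ℓ (t + s)).1 = (lineVec ℓ t).1 + (lineVec ℓ s).1 := by
  cases ℓ <;> simp [lineVec]

lemma lineVec_add_snd (ℓ : Option F) (t s : F) :
    (lineVec ℓ (t + s)).2 = (lineVec ℓ t).2 + (lineVec ℓ s).2 := by
  cases ℓ <;> simp [lineVec] <;> ring

lemma trace_Wadj_comp_Wline (hdeg : ∀ c : F, c ≠ 0 → ∃ x, ψ (c * x) ≠ 1)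
    (ℓ : Option F) {t s : F} (hts : t ≠ s) :
    LinearMap.trace ℂ (EuclideanSpace ℂ F) (Wadj ψ ℓ t ∘ₗ Wline ψ ℓ s) = 0 := by
  have h0 : -t + s ≠ 0 := fun h => hts (by linear_combination -h)
  rw [Wadj, LinearMap.smul_comp, Wline, Wline, weyl_comp, map_smul, map_smul,
    ← lineVec_add_fst, ← lineVec_add_snd,
    trace_weyl_eq_zero ψ hdeg (lineVec_ne_zero ℓ h0), smul_zero, smul_zero]

lemma inner_basis_self {d : ℕ} (e : OrthonormalBasis (Fin d) ℂ (EuclideanSpace ℂ F))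
    (m : Fin d) : ⟪e m, e m⟫ = 1 := by
  rw [inner_self_eq_norm_sq_to_K, e.orthonormal.1 m]
  norm_num

/-- Row orthogonality of the eigenvalue matrix. -/
lemma row_orth (hnorm : ∀ x, ‖ψ x‖ = 1) (hdeg : ∀ c : F, c ≠ 0 → ∃ x, ψ (c * x) ≠ 1)
    (ℓ : Option F) {d : ℕ} (e : OrthonormalBasis (Fin d) ℂ (EuclideanSpace ℂ F))
    (lam : Fin d → F → ℂ) (heig : ∀ m t, Wline ψ ℓ t (e m) = lam m t • e m)
    {t s : F} (hts : t ≠ s) :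
    ∑ m, (starRingEnd ℂ) (lam m t) * lam m s = 0 := by
  have key : ∀ m, (starRingEnd ℂ) (lam m t) * lam m s
      = ⟪e m, (Wadj ψ ℓ t ∘ₗ Wline ψ ℓ s) (e m)⟫ := by
    intro m
    rw [LinearMap.comp_apply, ← inner_Wline_left ψ hnorm, heig, heig, inner_smul_left,
      inner_smul_right, inner_basis_self, mul_one]
  rw [Finset.sum_congr rfl (fun m _ => key m), sum_inner_eq_trace,
    trace_Wadj_comp_Wline ψ hdeg ℓ hts]

/-- Unit modulus of the eigenvalues. -/
lemma lam_unit (hnorm : ∀ x, ‖ψ x‖ = 1) (ℓ : Option F) {d : ℕ}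
    (e : OrthonormalBasis (Fin d) ℂ (EuclideanSpace ℂ F))
    (lam : Fin d → F → ℂ) (heig : ∀ m t, Wline ψ ℓ t (e m) = lam m t • e m)
    (m : Fin d) (t : F) : (starRingEnd ℂ) (lam m t) * lam m t = 1 := by
  have h : ⟪Wline ψ ℓ t (e m), Wline ψ ℓ t (e m)⟫ = ⟪e m, e m⟫ :=
    weyl_inner_weyl ψ hnorm (lineVec ℓ t).1 (lineVec ℓ t).2 (e m) (e m)
  rw [heig, inner_smul_left, inner_smul_right, inner_basis_self, mul_one] at h
  exact h

lemma lam_zero (ℓ : Option F) {d : ℕ}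
    (e : OrthonormalBasis (Fin d) ℂ (EuclideanSpace ℂ F))
    (lam : Fin d → F → ℂ) (heig : ∀ m t, Wline ψ ℓ t (e m) = lam m t • e m)
    (m : Fin d) : lam m 0 = 1 := by
  have h := heig m 0
  rw [Wline_zero, LinearMap.id_apply] at h
  have hne : e m ≠ 0 := by
    intro h0
    have := e.orthonormal.1 m
    rw [h0, norm_zero] at this
    norm_num at this
  have : (lam m 0 - 1) • e m = 0 := by
    rw [sub_smul, one_smul, ← h, sub_self]
  rcases smul_eq_zero.mp this with h1 | h1
  · linear_combination h1
  · exact absurd h1 hne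

/-- Column orthogonality, deduced from row orthogonality by a matrix argument. -/
lemma col_orth {d : ℕ} (hd : Fintype.card F = d) (lam : Fin d → F → ℂ)
    (hrow : ∀ t s : F, t ≠ s → ∑ m, (starRingEnd ℂ) (lam m t) * lam m s = 0)
    (hunit : ∀ m t, (starRingEnd ℂ) (lam m t) * lam m t = 1) (m m' : Fin d) :
    ∑ t : F, (starRingEnd ℂ) (lam m t) * lam m' t
      = if m = m' then (d : ℂ) else 0 := by
  classical
  let eqc : F ≃ Fin d := Fintype.equivFinOfCardEq hd
  set N : Matrix F F ℂ := fun t u => lam (eqc u) t with hN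
  have hd0 : (d : ℂ) ≠ 0 := by
    have : 0 < d := hd ▸ Fintype.card_pos
    exact_mod_cast this.ne'
  have hNN : N * Nᴴ = (d : ℂ) • 1 := by
    ext t s
    rw [Matrix.mul_apply]
    simp only [Matrix.conjTranspose_apply]
    simp only [Matrix.conjTranspose_apply, Matrix.smul_apply, Matrix.one_apply, smul_eq_mul,
      hN, Complex.star_def]
    rw [Equiv.sum_comp eqc (fun u => lam u t * (starRingEnd ℂ) (lam u s))]
    by_cases hts : t = s
    · subst hts
      rw [if_pos rfl, mul_one]
      have : ∀ u : Fin d, lam u t * (starRingEnd ℂ) (lam u t) = 1 := fun u => by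
        rw [mul_comm]; exact hunit u t
      rw [Finset.sum_congr rfl fun u _ => this u, Finset.sum_const, Finset.card_univ,
        Fintype.card_fin, nsmul_eq_mul, mul_one]
    · rw [if_neg hts, mul_zero]
      have : ∑ u : Fin d, lam u t * (starRingEnd ℂ) (lam u s)
          = (starRingEnd ℂ) (∑ u : Fin d, (starRingEnd ℂ) (lam u t) * lam u s) := by
        rw [map_sum]
        exact Finset.sum_congr rfl fun u _ => by rw [map_mul, Complex.conj_conj]
      rw [this, hrow t s hts, map_zero]
  have h1 : N * ((d : ℂ)⁻¹ • Nᴴ) = 1 := by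
    rw [Matrix.mul_smul, hNN, smul_smul, inv_mul_cancel₀ hd0, one_smul]
  have h2 : ((d : ℂ)⁻¹ • Nᴴ) * N = 1 := mul_eq_one_comm.mp h1
  have h3 : Nᴴ * N = (d : ℂ) • 1 := by
    calc Nᴴ * N = (d : ℂ) • (((d : ℂ)⁻¹ • Nᴴ) * N) := by
          rw [Matrix.smul_mul, smul_smul, mul_inv_cancel₀ hd0, one_smul]
      _ = (d : ℂ) • 1 := by rw [h2]
  have h4 : (Nᴴ * N) (eqc.symm m) (eqc.symm m')
      = ((d : ℂ) • (1 : Matrix F F ℂ)) (eqc.symm m) (eqc.symm m') := by rw [h3]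
  rw [Matrix.mul_apply] at h4
  simp only [Matrix.conjTranspose_apply] at h4
  simp only [Matrix.conjTranspose_apply, Matrix.smul_apply, Matrix.one_apply, smul_eq_mul,
    hN, Complex.star_def, Equiv.apply_symm_apply] at h4
  rw [h4]
  by_cases hmm : m = m'
  · subst hmm
    rw [if_pos rfl, if_pos rfl, mul_one]
  · rw [if_neg hmm, if_neg (fun h => hmm (by
      have := congrArg eqc.symm.symm h
      simpa using this)), mul_zero]

/-! ### Cross-class orthogonality -/

lemma exists_sympl {ℓ ℓ' : Option F} (hll : ℓ ≠ ℓ') {t : F} (ht : t ≠ 0) (z : F) :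
    ∃ s, (lineVec ℓ t).2 * (lineVec ℓ' s).1 - (lineVec ℓ' s).2 * (lineVec ℓ t).1 = z := by
  match ℓ, ℓ' with
  | none, none => exact absurd rfl hll
  | none, some m' =>
    refine ⟨z / t, ?_⟩
    simp only [lineVec]
    field_simp
    ring
  | some m, none =>
    refine ⟨-(z / t), ?_⟩
    simp only [lineVec]
    field_simp
    ring
  | some m, some m' =>
    have hmm : m - m' ≠ 0 := fun h => hll (by rw [sub_eq_zero.mp h])
    refine ⟨z / (t * (m - m')), ?_⟩
    simp only [lineVec]
    field_simp

lemma inner_self_one {f : EuclideanSpace ℂ F} (hf : ‖f‖ = 1) : ⟪f, f⟫ = 1 := by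
  rw [inner_self_eq_norm_sq_to_K, hf]
  norm_num

/-- A joint eigenvector of the class `ℓ'` is "balanced" for every nontrivial operator from a
different class `ℓ`. -/
lemma inner_Wline_eq_zero (hnorm : ∀ x, ‖ψ x‖ = 1) (hdeg : ∀ c : F, c ≠ 0 → ∃ x, ψ (c * x) ≠ 1)
    {ℓ ℓ' : Option F} (hll : ℓ ≠ ℓ') {t : F} (ht : t ≠ 0)
    (f : EuclideanSpace ℂ F) (hf : ‖f‖ = 1) (mu : F → ℂ)
    (hmu : ∀ s, Wline ψ ℓ' s f = mu s • f) :
    ⟪f, Wline ψ ℓ t f⟫ = 0 := by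
  obtain ⟨x₀, hx₀⟩ := hdeg 1 one_ne_zero
  obtain ⟨s, hs⟩ := exists_sympl hll ht (1 * x₀)
  set a := (lineVec ℓ t).1
  set b := (lineVec ℓ t).2
  set c := (lineVec ℓ' s).1
  set ee := (lineVec ℓ' s).2
  -- the two composition formulas
  have hcomp1 : Wline ψ ℓ' s (Wline ψ ℓ t f) = ψ (b * c) • weyl ψ (c + a) (ee + b) f := by
    have := congrArg (fun A => A f) (weyl_comp ψ c ee a b)
    simp at this; exact this
  have hcomp2 : Wline ψ ℓ t (Wline ψ ℓ' s f) = ψ (ee * a) • weyl ψ (a + c) (b + ee) f := by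
    have := congrArg (fun A => A f) (weyl_comp ψ a b c ee)
    simp at this; exact this
  have hswap : weyl ψ (c + a) (ee + b) f = weyl ψ (a + c) (b + ee) f := by
    rw [add_comm c a, add_comm ee b]
  have hmu_unit : (starRingEnd ℂ) (mu s) * mu s = 1 := by
    have h := weyl_inner_weyl ψ hnorm c ee f f
    change ⟪Wline ψ ℓ' s f, Wline ψ ℓ' s f⟫ = ⟪f, f⟫ at h
    rw [hmu, inner_smul_left, inner_smul_right, inner_self_one hf, mul_one] at h
    exact h
  have hpsine : ψ (b * c - ee * a) ≠ 1 := by rw [hs]; exact hx₀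
  -- main computation
  have h0 : ⟪f, Wline ψ ℓ t f⟫ = ⟪Wline ψ ℓ' s f, Wline ψ ℓ' s (Wline ψ ℓ t f)⟫ :=
    (weyl_inner_weyl ψ hnorm c ee f (Wline ψ ℓ t f)).symm
  have h1 : Wline ψ ℓ' s (Wline ψ ℓ t f)
      = (ψ (b * c) * (ψ (ee * a))⁻¹ * mu s) • Wline ψ ℓ t f := by
    rw [hcomp1, hswap]
    have h2 : weyl ψ (a + c) (b + ee) f = (ψ (ee * a))⁻¹ • Wline ψ ℓ t (Wline ψ ℓ' s f) := by
      rw [hcomp2, smul_smul, inv_mul_cancel₀ (psi_ne_zero ψ hnorm _), one_smul]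
    rw [h2, hmu, map_smul, smul_smul, smul_smul]
    try ring_nf
  have hpsi_inv : (ψ (ee * a))⁻¹ = ψ (-(ee * a)) := by
    refine inv_eq_of_mul_eq_one_right ?_
    rw [← AddChar.map_add_eq_mul, add_neg_cancel, AddChar.map_zero_eq_one]
  have expand : ⟪f, Wline ψ ℓ t f⟫
      = (starRingEnd ℂ) (mu s) * (ψ (b * c) * (ψ (ee * a))⁻¹ * mu s) * ⟪f, Wline ψ ℓ t f⟫ := by
    conv_lhs => rw [h0]
    rw [h1, hmu, inner_smul_left, inner_smul_right]
    ring
  have hsplit : ψ (b * c - ee * a) = ψ (b * c) * (ψ (ee * a))⁻¹ := by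
    rw [hpsi_inv, ← AddChar.map_add_eq_mul]
    exact congrArg ψ (by ring)
  have key : ⟪f, Wline ψ ℓ t f⟫ = ψ (b * c - ee * a) * ⟪f, Wline ψ ℓ t f⟫ := by
    rw [hsplit]
    linear_combination expand + ψ (b * c) * (ψ (ee * a))⁻¹ * ⟪f, Wline ψ ℓ t f⟫ * hmu_unit
  have : (1 - ψ (b * c - ee * a)) * ⟪f, Wline ψ ℓ t f⟫ = 0 := by
    rw [sub_mul, one_mul]
    linear_combination key
  rcases mul_eq_zero.mp this with h | h
  · exact absurd (by linear_combination -h) hpsine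
  · exact h

/-! ### The unbiasedness computation -/

lemma norm_inner_eq (hnorm : ∀ x, ‖ψ x‖ = 1) (hdeg : ∀ c : F, c ≠ 0 → ∃ x, ψ (c * x) ≠ 1)
    {d : ℕ} (hd : Fintype.card F = d) {ℓ ℓ' : Option F} (hll : ℓ ≠ ℓ')
    (e e' : OrthonormalBasis (Fin d) ℂ (EuclideanSpace ℂ F)) (lam lam' : Fin d → F → ℂ)
    (heig : ∀ m t, Wline ψ ℓ t (e m) = lam m t • e m)
    (heig' : ∀ m t, Wline ψ ℓ' t (e' m) = lam' m t • e' m)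
    (m m' : Fin d) :
    ‖⟪e m, e' m'⟫‖ = 1 / Real.sqrt d := by
  classical
  have hrow : ∀ t s : F, t ≠ s → ∑ k, (starRingEnd ℂ) (lam k t) * lam k s = 0 :=
    fun t s hts => row_orth ψ hnorm hdeg ℓ e lam heig hts
  have hunit : ∀ k t, (starRingEnd ℂ) (lam k t) * lam k t = 1 :=
    lam_unit ψ hnorm ℓ e lam heig
  have hcol := col_orth hd lam hrow hunit
  set f : EuclideanSpace ℂ F := e' m' with hfdef
  have hf : ‖f‖ = 1 := e'.orthonormal.1 m'
  set cc : Fin d → ℂ := fun k => ⟪e k, f⟫ with hcc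
  -- step 1 : diagonal inner products of f with the class of ℓ
  have key1 : ∀ t : F, ⟪f, Wline ψ ℓ t f⟫ = if t = 0 then 1 else 0 := by
    intro t
    by_cases ht : t = 0
    · subst ht
      rw [if_pos rfl, Wline_zero, LinearMap.id_apply]
      exact inner_self_one hf
    · rw [if_neg ht]
      exact inner_Wline_eq_zero ψ hnorm hdeg hll ht f hf (lam' m') (heig' m')
  -- step 2 : expansion over the eigenbasis of ℓ
  have key2 : ∀ t : F, ∑ k, (starRingEnd ℂ) (cc k) * cc k * lam k t
      = if t = 0 then 1 else 0 := by
    intro t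
    rw [← key1 t]
    have hfs : f = ∑ k, cc k • e k := by
      rw [hcc]
      exact (e.sum_repr' f).symm
    have hWf : Wline ψ ℓ t f = ∑ k, (cc k * lam k t) • e k := by
      conv_lhs => rw [hfs]
      rw [map_sum]
      refine Finset.sum_congr rfl fun k _ => ?_
      rw [map_smul, heig, smul_smul]
    rw [hWf, inner_sum]
    refine Finset.sum_congr rfl fun k _ => ?_
    rw [inner_smul_right]
    have hfe : (⟪f, e k⟫ : ℂ) = (starRingEnd ℂ) (cc k) := (inner_conj_symm f (e k)).symm
    rw [hfe]
    ring
  -- step 3 : extract the coefficient via column orthogonality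
  have hA : ∑ t : F, (starRingEnd ℂ) (lam m t) * (if t = 0 then (1:ℂ) else 0) = 1 := by
    simp only [mul_ite, mul_one, mul_zero]
    rw [Finset.sum_ite_eq' Finset.univ (0 : F) (fun t => (starRingEnd ℂ) (lam m t)),
      if_pos (Finset.mem_univ _), lam_zero ψ ℓ e lam heig m, map_one]
  have hB : ∑ t : F, (starRingEnd ℂ) (lam m t) * (∑ k, (starRingEnd ℂ) (cc k) * cc k * lam k t)
      = ((starRingEnd ℂ) (cc m) * cc m) * d := by
    calc ∑ t : F, (starRingEnd ℂ) (lam m t) * (∑ k, (starRingEnd ℂ) (cc k) * cc k * lam k t)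
        = ∑ t : F, ∑ k, ((starRingEnd ℂ) (cc k) * cc k) * ((starRingEnd ℂ) (lam m t) * lam k t) := by
          refine Finset.sum_congr rfl fun t _ => ?_
          rw [Finset.mul_sum]
          exact Finset.sum_congr rfl fun k _ => by ring
      _ = ∑ k, ∑ t : F, ((starRingEnd ℂ) (cc k) * cc k) * ((starRingEnd ℂ) (lam m t) * lam k t) :=
          Finset.sum_comm
      _ = ∑ k, ((starRingEnd ℂ) (cc k) * cc k) * (∑ t : F, (starRingEnd ℂ) (lam m t) * lam k t) := by
          exact Finset.sum_congr rfl fun k _ => (Finset.mul_sum _ _ _).symm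
      _ = ∑ k, ((starRingEnd ℂ) (cc k) * cc k) * (if m = k then (d : ℂ) else 0) := by
          exact Finset.sum_congr rfl fun k _ => by rw [hcol m k]
      _ = ((starRingEnd ℂ) (cc m) * cc m) * d := by
          simp only [mul_ite, mul_zero]
          rw [Finset.sum_ite_eq Finset.univ m (fun k => ((starRingEnd ℂ) (cc k) * cc k) * d),
            if_pos (Finset.mem_univ _)]
  have key3 : ((starRingEnd ℂ) (cc m) * cc m) * d = 1 := by
    rw [← hB, ← hA]
    exact Finset.sum_congr rfl fun t _ => by rw [key2 t]
  -- step 4 : conclude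
  have hc2 : (starRingEnd ℂ) (cc m) * cc m = ((‖cc m‖ ^ 2 : ℝ) : ℂ) := by
    rw [mul_comm, Complex.mul_conj, Complex.normSq_eq_norm_sq]
  have hre : ‖cc m‖ ^ 2 * (d : ℝ) = 1 := by
    have h6 : ((‖cc m‖ ^ 2 : ℝ) : ℂ) * (d : ℂ) = 1 := by
      rw [← hc2]
      exact key3
    exact_mod_cast h6
  have hdpos : (0 : ℝ) < d := by
    have : 0 < d := hd ▸ Fintype.card_pos
    exact_mod_cast this
  have hsq : ‖cc m‖ ^ 2 = 1 / d := by
    rw [eq_div_iff hdpos.ne']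
    exact hre
  have : ‖cc m‖ = Real.sqrt (1 / d) := by
    rw [← hsq, Real.sqrt_sq (norm_nonneg _)]
  rw [show ⟪e m, e' m'⟫ = cc m from rfl, this, one_div, Real.sqrt_inv, one_div]

end MUB

end

/-- Two orthonormal bases of `ℂ^d` are *unbiased* if all scalar products between
their members have modulus `1/√d`. -/
def Unbiased {d : ℕ} (A B : OrthonormalBasis (Fin d) ℂ (EuclideanSpace ℂ (Fin d))) : Prop :=
  ∀ j k, ‖⟪A j, B k⟫‖ = 1 / Real.sqrt d

/-- If `d = p^n ≥ 2` is a prime power then a complete set of `d + 1` pairwise mutually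
unbiased bases exists in `ℂ^d`. -/
theorem complete_mub_of_prime_power (d p n : ℕ) (hp : p.Prime) (hn : 1 ≤ n)
    (hd : d = p ^ n) :
    ∃ B : Fin (d + 1) → OrthonormalBasis (Fin d) ℂ (EuclideanSpace ℂ (Fin d)),
      ∀ j k, j ≠ k → Unbiased (B j) (B k) := by
  classical
  haveI : Fact p.Prime := ⟨hp⟩
  haveI : NeZero p := ⟨hp.ne_zero⟩
  letI : Fintype (GaloisField p n) := Fintype.ofFinite _
  letI : DecidableEq (GaloisField p n) := Classical.decEq _
  have hcard : Fintype.card (GaloisField p n) = d := by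
    rw [hd, ← GaloisField.card p n (by omega), Nat.card_eq_fintype_card]
  have hζ : IsPrimitiveRoot (Complex.exp (2 * Real.pi * Complex.I / p)) p :=
    Complex.isPrimitiveRoot_exp p hp.ne_zero
  have hζp : Complex.exp (2 * Real.pi * Complex.I / p) ^ p = 1 := hζ.pow_eq_one
  let χ : AddChar (ZMod p) ℂ := AddChar.zmodChar p hζp
  let tr : GaloisField p n →+ ZMod p :=
    (Algebra.trace (ZMod p) (GaloisField p n)).toAddMonoidHom
  let ψ : AddChar (GaloisField p n) ℂ := χ.compAddMonoidHom tr
  have hψval : ∀ x, ψ x = Complex.exp (2 * Real.pi * Complex.I / p) ^ (tr x).val :=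
    fun x => by
      rw [AddChar.compAddMonoidHom_apply, AddChar.zmodChar_apply]
  have hnorm : ∀ x, ‖ψ x‖ = 1 := by
    intro x
    rw [hψval, norm_pow, Complex.norm_eq_one_of_pow_eq_one hζp hp.ne_zero, one_pow]
  have hdeg : ∀ c : GaloisField p n, c ≠ 0 → ∃ x, ψ (c * x) ≠ 1 := by
    intro c hc
    obtain ⟨y, hy⟩ := Algebra.trace_surjective (ZMod p) (GaloisField p n) 1
    refine ⟨c⁻¹ * y, ?_⟩
    have hcy : c * (c⁻¹ * y) = y := by field_simp
    have htry : tr y = 1 := hy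
    haveI : Fact (1 < p) := ⟨hp.one_lt⟩
    rw [hcy, hψval, htry, ZMod.val_one p, pow_one]
    exact hζ.ne_one hp.one_lt
  choose e lam heig using fun ℓ : Option (GaloisField p n) =>
    MUB.exists_eigenbasis ψ hnorm hcard ℓ
  let idx : Fin d ≃ GaloisField p n := (Fintype.equivFinOfCardEq hcard).symm
  let L := LinearIsometryEquiv.piLpCongrLeft 2 ℂ ℂ idx
  let eqopt : Fin (d + 1) ≃ Option (GaloisField p n) :=
    Fintype.equivOfCardEq (by simp [hcard])
  refine ⟨fun j => (e (eqopt j)).map L.symm, fun j k hjk => ?_⟩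
  intro r s
  rw [OrthonormalBasis.map_apply, OrthonormalBasis.map_apply,
    LinearIsometryEquiv.inner_map_map]
  exact MUB.norm_inner_eq ψ hnorm hdeg hcard (fun h => hjk (eqopt.injective h))
    (e _) (e _) (lam _) (lam _) (heig _) (heig _) r s
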